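/- Suppose nk balls are distributed into n bins, where the bin of each ball is determined by an (8c·log n)-wise independent hash function that is uniform on [n] for each ball, with k ≥ 2 and c > 1. Then for any fixed bin v, the probability that bin v receives at least 16ck·log n balls is at most n^{-2c}. -/

import Mathlib

open MeasureTheory ProbabilityTheory

/-- Suppose `n·k` balls are distributed into `n` bins, where the bin of
each ball is given by an `(8c·log n)`-wise independent hash family that is uniform on
`[n]` for each ball, with `k ≥ 2` and `c > 1`. Then for any fixed bin `v`, the
probability that bin `v` receives at least `16ck·log n` balls is at most `n^{-2c}`. -/
theorem balls_in_bins_twise {Ω : Type*} [MeasurableSpace Ω] (μ : Measure Ω)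
    [IsProbabilityMeasure μ] (n k : ℕ) (hn : 2 ≤ n) (hk : 2 ≤ k)
    (c : ℝ) (hc : 1 < c) (t : ℕ) (ht : (t : ℝ) = 8 * c * Real.logb 2 n)
    (h : Fin (n * k) → Ω → Fin n)
    (hmeas : ∀ j, Measurable (h j))
    (hunif : ∀ j x, μ {ω | h j ω = x} = (n : ENNReal)⁻¹)
    (hindep : ∀ s : Finset (Fin (n * k)), s.card = t →
      iIndepFun (m := fun _ : s => (inferInstance : MeasurableSpace (Fin n)))
        (fun j : s => h j) μ) :
    ∀ v : Fin n,
      μ {ω | 16 * c * (k : ℝ) * Real.logb 2 n ≤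
          ((Finset.univ.filter (fun j => h j ω = v)).card : ℝ)} ≤
        ENNReal.ofReal ((n : ℝ) ^ (-(2 * c))) := by
  classical
  intro v
  -- basic numeric facts
  have hn0 : (0:ℝ) < n := by positivity
  have hlogb : 1 ≤ Real.logb 2 n := by
    rw [Real.le_logb_iff_rpow_le one_lt_two hn0, Real.rpow_one]
    exact_mod_cast hn
  have htR : (8:ℝ) ≤ (t:ℝ) := by
    rw [ht]; nlinarith
  have ht1 : 1 ≤ t := by exact_mod_cast (by linarith : (1:ℝ) ≤ (t:ℝ))
  set m : ℕ := 2 * k * t with hm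
  have htm : t ≤ m := by
    calc t = 1 * t := (one_mul t).symm
    _ ≤ (2*k) * t := Nat.mul_le_mul_right t (by omega)
  -- the event, as a natural-number condition
  have hset : {ω | 16 * c * (k : ℝ) * Real.logb 2 n ≤
      ((Finset.univ.filter (fun j => h j ω = v)).card : ℝ)} =
      {ω | m ≤ (Finset.univ.filter (fun j => h j ω = v)).card} := by
    have hmr : ((m:ℝ)) = 16 * c * (k : ℝ) * Real.logb 2 n := by
      rw [hm]; push_cast; rw [ht]; ring
    ext ω
    simp only [Set.mem_setOf_eq, ← hmr, Nat.cast_le]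
  rw [hset]
  set E : Set Ω := {ω | m ≤ (Finset.univ.filter (fun j => h j ω = v)).card} with hE
  -- events: all balls of S land in v
  set A : Finset (Fin (n*k)) → Set Ω := fun S => ⋂ j ∈ S, (h j) ⁻¹' {v} with hA
  have hAmeas : ∀ S, MeasurableSet (A S) := by
    intro S
    exact MeasurableSet.biInter (Set.to_countable _)
      (fun j _ => (hmeas j) (measurableSet_singleton v))
  have hAmem : ∀ S ω, ω ∈ A S ↔ S ⊆ Finset.univ.filter (fun j => h j ω = v) := by
    intro S ω
    simp [hA, Finset.subset_iff, Set.mem_iInter]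
  -- probability of A S for S of card t
  have hAmeasure : ∀ S : Finset (Fin (n*k)), S.card = t →
      μ (A S) = (n : ENNReal)⁻¹ ^ t := by
    intro S hS
    have hind := (hindep S hS).measure_inter_preimage_eq_mul
      (Finset.univ : Finset S) (sets := fun _ => {v})
      (fun i _ => measurableSet_singleton v)
    have hiA : (⋂ i ∈ (Finset.univ : Finset S), (h i) ⁻¹' {v}) = A S := by
      rw [hA]
      simp only [Finset.mem_univ, Set.iInter_true]
      ext ω
      simp only [Set.mem_iInter, Set.mem_preimage, Set.mem_singleton_iff, Subtype.forall]
    rw [hiA] at hind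
    rw [hind]
    have : ∀ i : S, μ ((h i) ⁻¹' {v}) = (n : ENNReal)⁻¹ := by
      intro i
      have : (h i) ⁻¹' {v} = {ω | h i ω = v} := by ext ω; simp
      rw [this]; exact hunif i v
    rw [Finset.prod_congr rfl (fun i _ => this i), Finset.prod_const,
      Finset.card_univ, Fintype.card_coe, hS]
  -- the counting function
  set f : Ω → ENNReal := fun ω =>
    ∑ S ∈ Finset.powersetCard t (Finset.univ : Finset (Fin (n*k))),
      (A S).indicator (1 : Ω → ENNReal) ω with hf
  have hfmeas : Measurable f := by
    apply Finset.measurable_sum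
    intro S _
    exact Measurable.indicator measurable_const (hAmeas S)
  -- Markov-type bound
  have hEsub : E ⊆ {ω | (Nat.choose m t : ENNReal) ≤ f ω} := by
    intro ω hω
    have hTcard : m ≤ (Finset.univ.filter (fun j => h j ω = v)).card := hω
    set T := Finset.univ.filter (fun j => h j ω = v) with hT
    have hsub : Finset.powersetCard t T ⊆
        Finset.powersetCard t (Finset.univ : Finset (Fin (n*k))) :=
      Finset.powersetCard_mono (Finset.subset_univ T)
    have hsum : ∑ S ∈ Finset.powersetCard t T,
        (A S).indicator (1 : Ω → ENNReal) ω ≤ f ω := by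
      rw [hf]
      exact Finset.sum_le_sum_of_subset hsub
    have hsum2 : ∑ S ∈ Finset.powersetCard t T,
        (A S).indicator (1 : Ω → ENNReal) ω
        = (Nat.choose T.card t : ENNReal) := by
      rw [Finset.sum_congr rfl (fun S hS => ?_), Finset.sum_const,
        Finset.card_powersetCard, nsmul_eq_mul, mul_one]
      have hST : S ⊆ T := (Finset.mem_powersetCard.1 hS).1
      rw [Set.indicator_of_mem ((hAmem S ω).2 hST), Pi.one_apply]
    have hchoose : (Nat.choose m t : ENNReal) ≤ (Nat.choose T.card t : ENNReal) := by
      exact_mod_cast Nat.choose_le_choose t hTcard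
    calc (Nat.choose m t : ENNReal) ≤ (Nat.choose T.card t : ENNReal) := hchoose
      _ = _ := hsum2.symm
      _ ≤ f ω := hsum
  have hmarkov : (Nat.choose m t : ENNReal) * μ E ≤ ∫⁻ ω, f ω ∂μ := by
    calc (Nat.choose m t : ENNReal) * μ E
        ≤ (Nat.choose m t : ENNReal) * μ {ω | (Nat.choose m t : ENNReal) ≤ f ω} := by
          exact mul_le_mul_right (measure_mono hEsub) _
      _ ≤ ∫⁻ ω, f ω ∂μ := mul_meas_ge_le_lintegral₀ hfmeas.aemeasurable _
  -- compute the integral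
  have hint : ∫⁻ ω, f ω ∂μ = (Nat.choose (n*k) t : ENNReal) * (n : ENNReal)⁻¹ ^ t := by
    simp only [hf]
    have hlint : ∫⁻ ω, ∑ S ∈ Finset.powersetCard t (Finset.univ : Finset (Fin (n*k))),
        (A S).indicator (1 : Ω → ENNReal) ω ∂μ =
        ∑ S ∈ Finset.powersetCard t (Finset.univ : Finset (Fin (n*k))),
        ∫⁻ ω, (A S).indicator (1 : Ω → ENNReal) ω ∂μ :=
      lintegral_finset_sum _ (fun S _ => Measurable.indicator measurable_const (hAmeas S))
    rw [hlint]
    have : ∀ S ∈ Finset.powersetCard t (Finset.univ : Finset (Fin (n*k))),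
        ∫⁻ ω, (A S).indicator (1 : Ω → ENNReal) ω ∂μ = (n : ENNReal)⁻¹ ^ t := by
      intro S hS
      rw [lintegral_indicator_one (hAmeas S)]
      exact hAmeasure S (Finset.mem_powersetCard.1 hS).2
    rw [Finset.sum_congr rfl this, Finset.sum_const, Finset.card_powersetCard,
      Finset.card_univ, Fintype.card_fin, nsmul_eq_mul]
  -- natural number inequality: choose(nk,t) * 2^t ≤ choose(m,t) * n^t
  have hnat : Nat.choose (n*k) t * 2^t ≤ Nat.choose m t * n^t := by
    have hD2k : 2*k ≤ m + 1 - t := by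
      have h1 : (2*k-1) ≤ (2*k-1)*t := Nat.le_mul_of_pos_right _ (by omega)
      have h2 : (2*k-1)*t = 2*k*t - t := by rw [Nat.sub_mul, one_mul]
      omega
    have e1 : Nat.descFactorial (n*k) t ≤ (n*k)^t := Nat.descFactorial_le_pow _ _
    have e2 : (m + 1 - t)^t ≤ Nat.descFactorial m t := Nat.pow_sub_le_descFactorial m t
    have hDnat : Nat.choose (n*k) t * (m+1-t)^t ≤ (n*k)^t * Nat.choose m t := by
      have key : Nat.factorial t * (Nat.choose (n*k) t * (m+1-t)^t) ≤
          Nat.factorial t * ((n*k)^t * Nat.choose m t) := by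
        calc Nat.factorial t * (Nat.choose (n*k) t * (m+1-t)^t)
            = Nat.descFactorial (n*k) t * (m+1-t)^t := by
              rw [Nat.descFactorial_eq_factorial_mul_choose]; ring
          _ ≤ (n*k)^t * Nat.descFactorial m t :=
              Nat.mul_le_mul e1 e2
          _ = Nat.factorial t * ((n*k)^t * Nat.choose m t) := by
              rw [Nat.descFactorial_eq_factorial_mul_choose]; ring
      exact Nat.le_of_mul_le_mul_left key (Nat.factorial_pos t)
    have h3 : Nat.choose (n*k) t * (2*k)^t ≤ Nat.choose (n*k) t * (m+1-t)^t :=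
      Nat.mul_le_mul_left _ (Nat.pow_le_pow_left hD2k t)
    have h4 : Nat.choose (n*k) t * 2^t * k^t ≤ Nat.choose m t * n^t * k^t := by
      calc Nat.choose (n*k) t * 2^t * k^t = Nat.choose (n*k) t * (2*k)^t := by
            rw [mul_pow]; ring
        _ ≤ Nat.choose (n*k) t * (m+1-t)^t := h3
        _ ≤ (n*k)^t * Nat.choose m t := hDnat
        _ = Nat.choose m t * n^t * k^t := by rw [mul_pow]; ring
    exact Nat.le_of_mul_le_mul_right h4 (Nat.pow_pos (n := t) (by omega))
  -- real inequality: (1/2)^t ≤ n^(-(2c))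
  have hhalf : ((1:ℝ)/2)^t ≤ (n:ℝ) ^ (-(2*c)) := by
    have hn2c : (n:ℝ) ^ (2*c) = (2:ℝ) ^ ((t:ℝ)/4) := by
      have h2n : (n:ℝ) = (2:ℝ) ^ (Real.logb 2 n) :=
        (Real.rpow_logb two_pos (by norm_num) hn0).symm
      rw [h2n, ← Real.rpow_mul (by norm_num)]
      congr 1
      rw [ht]; ring
    have hle : (n:ℝ) ^ (2*c) ≤ (2:ℝ)^t := by
      rw [hn2c, ← Real.rpow_natCast 2 t]
      apply Real.rpow_le_rpow_of_exponent_le one_le_two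
      have : (0:ℝ) ≤ t := by positivity
      linarith
    have hpos : (0:ℝ) < (n:ℝ) ^ (2*c) := Real.rpow_pos_of_pos hn0 _
    rw [Real.rpow_neg (le_of_lt hn0), one_div, inv_pow]
    exact inv_anti₀ hpos hle
  -- the final comparison in ENNReal
  have hfinalR : (Nat.choose (n*k) t : ℝ) * ((n:ℝ)⁻¹)^t ≤
      (Nat.choose m t : ℝ) * (n:ℝ) ^ (-(2*c)) := by
    have step1 : (Nat.choose (n*k) t : ℝ) * ((n:ℝ)⁻¹)^t ≤
        (Nat.choose m t : ℝ) * ((1:ℝ)/2)^t := by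
      rw [inv_pow, ← div_eq_mul_inv, one_div, inv_pow, ← div_eq_mul_inv,
        div_le_div_iff₀ (by positivity) (by positivity)]
      exact_mod_cast hnat
    calc (Nat.choose (n*k) t : ℝ) * ((n:ℝ)⁻¹)^t
        ≤ (Nat.choose m t : ℝ) * ((1:ℝ)/2)^t := step1
      _ ≤ (Nat.choose m t : ℝ) * (n:ℝ) ^ (-(2*c)) := by
          exact mul_le_mul_of_nonneg_left hhalf (by positivity)
  have hfinal : (Nat.choose (n*k) t : ENNReal) * (n : ENNReal)⁻¹ ^ t ≤
      (Nat.choose m t : ENNReal) * ENNReal.ofReal ((n:ℝ) ^ (-(2*c))) := by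
    have e1 : (n : ENNReal)⁻¹ ^ t = ENNReal.ofReal (((n:ℝ)⁻¹)^t) := by
      rw [ENNReal.ofReal_pow (by positivity), ENNReal.ofReal_inv_of_pos hn0,
        ENNReal.ofReal_natCast]
    have e2 : (Nat.choose (n*k) t : ENNReal) = ENNReal.ofReal (Nat.choose (n*k) t : ℝ) := by
      rw [ENNReal.ofReal_natCast]
    have e3 : (Nat.choose m t : ENNReal) = ENNReal.ofReal (Nat.choose m t : ℝ) := by
      rw [ENNReal.ofReal_natCast]
    rw [e1, e2, e3, ← ENNReal.ofReal_mul (by positivity), ← ENNReal.ofReal_mul (by positivity)]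
    exact ENNReal.ofReal_le_ofReal hfinalR
  -- put it together
  have hchoose_pos : (Nat.choose m t : ENNReal) ≠ 0 := by
    simp [Nat.choose_eq_zero_iff, not_lt.2 htm]
  have hchoose_ne_top : (Nat.choose m t : ENNReal) ≠ ⊤ := by
    exact ENNReal.natCast_ne_top _
  rw [← ENNReal.mul_le_mul_iff_right hchoose_pos hchoose_ne_top]
  calc (Nat.choose m t : ENNReal) * μ E ≤ ∫⁻ ω, f ω ∂μ := hmarkov
    _ = (Nat.choose (n*k) t : ENNReal) * (n : ENNReal)⁻¹ ^ t := hint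
    _ ≤ (Nat.choose m t : ENNReal) * ENNReal.ofReal ((n:ℝ) ^ (-(2*c))) := hfinal
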